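/- Along any trajectory z^{(m)} = H^m(z^{(0)}) of the operator H, the sequences (x_1^{(m)})_m and (y_1^{(m)})_m are nondecreasing, and for each j = 2,…,n and l = 2,…,ν the sequences (x_j^{(m)})_m and (y_l^{(m)})_m are nonincreasing; consequently the limit z_* = lim_{m→∞} z^{(m)} exists and z_* is a fixed point of H. -/
import Mathlib


open Filter Topology

/-- The evolution operator `H` of the hard-constrained bisexual population on
`ℝ^{n+1} × ℝ^{ν+1}` (female types `0,…,n`, male types `0,…,ν`; type "1" is index `0`). -/
def evolH (n ν : ℕ) (z : (Fin (n + 1) → ℝ) × (Fin (ν + 1) → ℝ)) :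
    (Fin (n + 1) → ℝ) × (Fin (ν + 1) → ℝ) :=
  (fun j => if j = 0 then 1 - z.2 0 * (1 - z.1 0) else z.2 0 * z.1 j,
   fun l => if l = 0 then 1 - z.1 0 * (1 - z.2 0) else z.1 0 * z.2 l)

lemma coord_le_one {k : ℕ} {x : Fin (k + 1) → ℝ} (hx : x ∈ stdSimplex ℝ (Fin (k + 1)))
    (i : Fin (k + 1)) : x i ≤ 1 := by
  calc x i ≤ ∑ j, x j := Finset.single_le_sum (fun j _ => hx.1 j) (Finset.mem_univ i)
  _ = 1 := hx.2

lemma evolH_mem (n ν : ℕ) {z : (Fin (n + 1) → ℝ) × (Fin (ν + 1) → ℝ)}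
    (hz : z ∈ stdSimplex ℝ (Fin (n + 1)) ×ˢ stdSimplex ℝ (Fin (ν + 1))) :
    evolH n ν z ∈ stdSimplex ℝ (Fin (n + 1)) ×ˢ stdSimplex ℝ (Fin (ν + 1)) := by
  obtain ⟨hx, hy⟩ := hz
  have hx0 := hx.1 0
  have hy0 := hy.1 0
  have hx1 := coord_le_one hx 0
  have hy1 := coord_le_one hy 0
  constructor
  · constructor
    · intro i
      simp only [evolH]
      split
      · nlinarith
      · exact mul_nonneg hy0 (hx.1 i)
    · simp only [evolH]
      rw [Fin.sum_univ_succ]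
      simp only [if_pos rfl, Fin.succ_ne_zero, if_false, eq_self_iff_true, if_true]
      rw [← Finset.mul_sum]
      have hs : ∑ j : Fin n, z.1 j.succ = 1 - z.1 0 := by
        have := hx.2; rw [Fin.sum_univ_succ] at this; linarith
      rw [hs]; ring
  · constructor
    · intro i
      simp only [evolH]
      split
      · nlinarith
      · exact mul_nonneg hx0 (hy.1 i)
    · simp only [evolH]
      rw [Fin.sum_univ_succ]
      simp only [if_pos rfl, Fin.succ_ne_zero, if_false, eq_self_iff_true, if_true]
      rw [← Finset.mul_sum]
      have hs : ∑ l : Fin ν, z.2 l.succ = 1 - z.2 0 := by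
        have := hy.2; rw [Fin.sum_univ_succ] at this; linarith
      rw [hs]; ring

lemma evolH_continuous (n ν : ℕ) : Continuous (evolH n ν) := by
  unfold evolH
  apply Continuous.prodMk <;>
  · apply continuous_pi
    intro j
    by_cases hj : j = 0
    · simp only [hj, eq_self_iff_true, if_true]; fun_prop
    · simp only [if_neg hj]; fun_prop

/-- Along any trajectory of `H` starting in `S`, the first coordinates are nondecreasing,
the remaining coordinates are nonincreasing, and the trajectory converges to a fixed
point of `H`. -/
theorem evolH_monotone_and_limit_exists (n ν : ℕ)
    (z : (Fin (n + 1) → ℝ) × (Fin (ν + 1) → ℝ))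
    (hz : z ∈ stdSimplex ℝ (Fin (n + 1)) ×ˢ stdSimplex ℝ (Fin (ν + 1))) :
    Monotone (fun m : ℕ => ((evolH n ν)^[m] z).1 0) ∧
    Monotone (fun m : ℕ => ((evolH n ν)^[m] z).2 0) ∧
    (∀ j : Fin (n + 1), j ≠ 0 → Antitone (fun m : ℕ => ((evolH n ν)^[m] z).1 j)) ∧
    (∀ l : Fin (ν + 1), l ≠ 0 → Antitone (fun m : ℕ => ((evolH n ν)^[m] z).2 l)) ∧
    ∃ zs : (Fin (n + 1) → ℝ) × (Fin (ν + 1) → ℝ),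
      Tendsto (fun m => (evolH n ν)^[m] z) atTop (𝓝 zs) ∧ evolH n ν zs = zs := by
  have hmem : ∀ m, (evolH n ν)^[m] z ∈
      stdSimplex ℝ (Fin (n + 1)) ×ˢ stdSimplex ℝ (Fin (ν + 1)) := by
    intro m
    induction m with
    | zero => simpa using hz
    | succ m ih => rw [Function.iterate_succ_apply']; exact evolH_mem n ν ih
  have hx0 : Monotone (fun m : ℕ => ((evolH n ν)^[m] z).1 0) := by
    apply monotone_nat_of_le_succ
    intro m
    rw [Function.iterate_succ_apply']
    obtain ⟨hx, hy⟩ := hmem m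
    have h1 := hx.1 0; have h2 := hy.1 0
    have h3 := coord_le_one hx 0; have h4 := coord_le_one hy 0
    simp only [evolH, eq_self_iff_true, if_true]
    nlinarith
  have hy0 : Monotone (fun m : ℕ => ((evolH n ν)^[m] z).2 0) := by
    apply monotone_nat_of_le_succ
    intro m
    rw [Function.iterate_succ_apply']
    obtain ⟨hx, hy⟩ := hmem m
    have h1 := hx.1 0; have h2 := hy.1 0
    have h3 := coord_le_one hx 0; have h4 := coord_le_one hy 0
    simp only [evolH, eq_self_iff_true, if_true]
    nlinarith
  have hxj : ∀ j : Fin (n + 1), j ≠ 0 → Antitone (fun m : ℕ => ((evolH n ν)^[m] z).1 j) := by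
    intro j hj
    apply antitone_nat_of_succ_le
    intro m
    rw [Function.iterate_succ_apply']
    obtain ⟨hx, hy⟩ := hmem m
    have h2 := hy.1 0
    have h4 := coord_le_one hy 0
    have h5 := hx.1 j
    simp only [evolH, if_neg hj]
    nlinarith
  have hyl : ∀ l : Fin (ν + 1), l ≠ 0 → Antitone (fun m : ℕ => ((evolH n ν)^[m] z).2 l) := by
    intro l hl
    apply antitone_nat_of_succ_le
    intro m
    rw [Function.iterate_succ_apply']
    obtain ⟨hx, hy⟩ := hmem m
    have h2 := hx.1 0
    have h4 := coord_le_one hx 0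
    have h5 := hy.1 l
    simp only [evolH, if_neg hl]
    nlinarith
  refine ⟨hx0, hy0, hxj, hyl, ?_⟩
  -- each coordinate converges
  have hconv1 : ∀ j : Fin (n + 1), ∃ L, Tendsto (fun m => ((evolH n ν)^[m] z).1 j) atTop (𝓝 L) := by
    intro j
    by_cases hj : j = 0
    · subst hj
      refine ⟨⨆ m, ((evolH n ν)^[m] z).1 0, tendsto_atTop_ciSup hx0 ?_⟩
      exact ⟨1, by rintro x ⟨m, rfl⟩; exact coord_le_one (hmem m).1 0⟩
    · refine ⟨⨅ m, ((evolH n ν)^[m] z).1 j, tendsto_atTop_ciInf (hxj j hj) ?_⟩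
      exact ⟨0, by rintro x ⟨m, rfl⟩; exact (hmem m).1.1 j⟩
  have hconv2 : ∀ l : Fin (ν + 1), ∃ L, Tendsto (fun m => ((evolH n ν)^[m] z).2 l) atTop (𝓝 L) := by
    intro l
    by_cases hl : l = 0
    · subst hl
      refine ⟨⨆ m, ((evolH n ν)^[m] z).2 0, tendsto_atTop_ciSup hy0 ?_⟩
      exact ⟨1, by rintro x ⟨m, rfl⟩; exact coord_le_one (hmem m).2 0⟩
    · refine ⟨⨅ m, ((evolH n ν)^[m] z).2 l, tendsto_atTop_ciInf (hyl l hl) ?_⟩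
      exact ⟨0, by rintro x ⟨m, rfl⟩; exact (hmem m).2.1 l⟩
  choose L1 hL1 using hconv1
  choose L2 hL2 using hconv2
  refine ⟨(L1, L2), ?_, ?_⟩
  · exact (tendsto_pi_nhds.2 hL1).prodMk_nhds (tendsto_pi_nhds.2 hL2)
  · have htend : Tendsto (fun m => (evolH n ν)^[m] z) atTop (𝓝 (L1, L2)) :=
      (tendsto_pi_nhds.2 hL1).prodMk_nhds (tendsto_pi_nhds.2 hL2)
    have h1 : Tendsto (fun m => (evolH n ν)^[m + 1] z) atTop (𝓝 (L1, L2)) :=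
      htend.comp (tendsto_add_atTop_nat 1)
    have h2 : Tendsto (fun m => evolH n ν ((evolH n ν)^[m] z)) atTop (𝓝 (evolH n ν (L1, L2))) :=
      ((evolH_continuous n ν).tendsto _).comp htend
    have heq : (fun m => evolH n ν ((evolH n ν)^[m] z)) = fun m => (evolH n ν)^[m + 1] z := by
      funext m; rw [Function.iterate_succ_apply']
    rw [heq] at h2
    exact tendsto_nhds_unique h2 h1
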